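/- Let a, b, c, d be real numbers, none of which is congruent mod ℤ to any other in the pairs (a,c), (a,d), (b,c), (b,d), and none of a, b equal to a non-positive integer shifted value. For 1 ≤ j ≤ r, define the polynomial P_j(t) = (a+t)_j (b+t)_j (c+t+j)_{r−j} (d+t+j)_{r−j} of degree 2r (Pochhammer in the first variable). If c_1, …, c_r, d_1, …, d_r are rationals with ∑_{j=1}^r (c_j + d_j t) P_j(t) = 0 identically, then c_j = d_j = 0 for all j. -/

import Mathlib

noncomputable def poch (a : ℝ) (n : ℕ) : ℝ := (ascPochhammer ℝ n).eval a

/-- `x` is not an integer. -/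
def NotInt (x : ℝ) : Prop := ∀ m : ℤ, x ≠ (m : ℝ)

/-- The polynomial (in `t`) `P_j(t) = (a+t)_j (b+t)_j (c+t+j)_{r−j} (d+t+j)_{r−j}`. -/
noncomputable def P (a b c d : ℝ) (r j : ℕ) (t : ℝ) : ℝ :=
  poch (a + t) j * poch (b + t) j * poch (c + t + j) (r - j) * poch (d + t + j) (r - j)

open Polynomial

lemma poch_succ (x : ℝ) (n : ℕ) : poch x (n+1) = poch x n * (x + n) :=
  ascPochhammer_succ_eval n x

lemma poch_ne_zero (x : ℝ) (n : ℕ) (h : ∀ i : ℕ, i < n → x + i ≠ 0) : poch x n ≠ 0 := by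
  induction n with
  | zero => simp [poch]
  | succ n ih =>
    rw [poch_succ]
    exact mul_ne_zero (ih fun i hi => h i (by omega)) (h n (by omega))

lemma notInt_poch_ne_zero (x : ℝ) (hx : NotInt x) (m : ℤ) (n : ℕ) :
    poch (x + m) n ≠ 0 := by
  apply poch_ne_zero
  intro i _ hzero
  have : x = ((-(m + i) : ℤ) : ℝ) := by push_cast; linarith
  exact hx _ this

noncomputable def pochPoly (α : ℝ) (n : ℕ) : Polynomial ℝ :=
  (ascPochhammer ℝ n).comp (C α + X)

lemma pochPoly_eval (α : ℝ) (n : ℕ) (t : ℝ) :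
    (pochPoly α n).eval t = poch (α + t) n := by
  simp [pochPoly, poch, eval_comp]

lemma pochPoly_succ (α : ℝ) (n : ℕ) :
    pochPoly α (n+1) = pochPoly α n * (X + C (α + n)) := by
  rw [pochPoly, ascPochhammer_succ_right, mul_comp]
  congr 1
  simp only [pochPoly, add_comp, X_comp, natCast_comp, map_add, C_eq_natCast]
  ring

noncomputable def Ppoly (a b c d : ℝ) (r j : ℕ) : Polynomial ℝ :=
  pochPoly a j * pochPoly b j * pochPoly (c + j) (r - j) * pochPoly (d + j) (r - j)

lemma Ppoly_eval (a b c d : ℝ) (r j : ℕ) (t : ℝ) :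
    (Ppoly a b c d r j).eval t = P a b c d r j t := by
  simp only [Ppoly, P, eval_mul, pochPoly_eval]
  ring_nf

lemma Ppoly_succ (a b c d : ℝ) (r j : ℕ) (hj : j ≤ r) :
    Ppoly a b c d (r+1) j =
      Ppoly a b c d r j * ((X + C (c + r)) * (X + C (d + r))) := by
  have h1 : r + 1 - j = (r - j) + 1 := by omega
  have h2 : (c + j) + ((r : ℝ) - (j : ℝ)) = c + r := by ring
  have h3 : (d + j) + ((r : ℝ) - (j : ℝ)) = d + r := by ring
  have hc : ((r - j : ℕ) : ℝ) = (r : ℝ) - (j : ℝ) := by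
    push_cast [Nat.cast_sub hj]; ring
  rw [Ppoly, Ppoly, h1, pochPoly_succ, pochPoly_succ, hc, h2, h3]
  ring

lemma key (a b c d : ℝ) (r : ℕ)
    (hac : NotInt (a - c)) (had : NotInt (a - d))
    (hbc : NotInt (b - c)) (hbd : NotInt (b - d))
    (cs ds : ℕ → ℚ)
    (h : ∀ t : ℝ, ∑ j ∈ Finset.Icc 1 r, ((cs j : ℝ) + (ds j : ℝ) * t) * P a b c d r j t = 0) :
    ∀ j ∈ Finset.Icc 1 r, cs j = 0 ∧ ds j = 0 := by
  induction r with
  | zero => intro j hj; simp at hj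
  | succ r ih =>
    -- polynomial identity
    have hP : ∑ j ∈ Finset.Icc 1 (r+1),
        (C ((cs j : ℝ)) + C ((ds j : ℝ)) * X) * Ppoly a b c d (r+1) j = 0 := by
      apply Polynomial.funext
      intro t
      simpa [eval_finset_sum, Ppoly_eval] using h t
    set G : Polynomial ℝ := (X + C (c + r)) * (X + C (d + r)) with hG
    set Q : Polynomial ℝ := ∑ j ∈ Finset.Icc 1 r,
        (C ((cs j : ℝ)) + C ((ds j : ℝ)) * X) * Ppoly a b c d r j with hQ
    set L : Polynomial ℝ := C ((cs (r+1) : ℝ)) + C ((ds (r+1) : ℝ)) * X with hL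
    set AB : Polynomial ℝ := Ppoly a b c d (r+1) (r+1) with hAB
    have hsplit : L * AB + Q * G = 0 := by
      have hmem : (r+1) ∉ Finset.Icc 1 r := by simp
      rw [hQ, Finset.sum_mul]
      rw [show Finset.Icc 1 (r+1) = insert (r+1) (Finset.Icc 1 r) by
        ext x; simp [Finset.mem_Icc, Finset.mem_insert]; omega] at hP
      rw [Finset.sum_insert hmem] at hP
      rw [← hP]
      refine congrArg₂ (· + ·) rfl ?_
      apply Finset.sum_congr rfl
      intro j hj
      rw [Ppoly_succ a b c d r j (Finset.mem_Icc.mp hj).2, mul_assoc]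
    -- AB doesn't vanish at -(c+r) and -(d+r)
    have hABc : AB.eval (-(c + r)) ≠ 0 := by
      rw [hAB, Ppoly, Nat.sub_self]
      simp only [eval_mul, pochPoly_eval]
      have h1 : a + -(c + r) = (a - c) + ((-r : ℤ) : ℝ) := by push_cast; ring
      have h2 : b + -(c + r) = (b - c) + ((-r : ℤ) : ℝ) := by push_cast; ring
      rw [h1, h2]
      simpa [poch] using mul_ne_zero (notInt_poch_ne_zero _ hac (-r) (r+1))
        (notInt_poch_ne_zero _ hbc (-r) (r+1))
    have hABd : AB.eval (-(d + r)) ≠ 0 := by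
      rw [hAB, Ppoly, Nat.sub_self]
      simp only [eval_mul, pochPoly_eval]
      have h1 : a + -(d + r) = (a - d) + ((-r : ℤ) : ℝ) := by push_cast; ring
      have h2 : b + -(d + r) = (b - d) + ((-r : ℤ) : ℝ) := by push_cast; ring
      rw [h1, h2]
      simpa [poch] using mul_ne_zero (notInt_poch_ne_zero _ had (-r) (r+1))
        (notInt_poch_ne_zero _ hbd (-r) (r+1))
    have hev : ∀ x : ℝ, L.eval x * AB.eval x + Q.eval x * ((x + (c + r)) * (x + (d + r))) = 0 := by
      intro x
      have := congrArg (Polynomial.eval x) hsplit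
      simp only [hG, eval_add, eval_mul, eval_X, eval_C, eval_zero] at this
      linear_combination this
    have hLc : L.eval (-(c + r)) = 0 := by
      have h1 := hev (-(c + (r:ℝ)))
      have h2 : L.eval (-(c+(r:ℝ))) * AB.eval (-(c+(r:ℝ))) = 0 := by linear_combination h1
      exact (mul_eq_zero.mp h2).resolve_right hABc
    have hLd : L.eval (-(d + r)) = 0 := by
      have h1 := hev (-(d + (r:ℝ)))
      have h2 : L.eval (-(d+(r:ℝ))) * AB.eval (-(d+(r:ℝ))) = 0 := by linear_combination h1
      exact (mul_eq_zero.mp h2).resolve_right hABd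
    -- deduce cs (r+1) = ds (r+1) = 0
    have hLeval : ∀ t : ℝ, L.eval t = (cs (r+1) : ℝ) + (ds (r+1) : ℝ) * t := by
      intro t; simp [hL]
    have htop : (cs (r+1) : ℝ) = 0 ∧ (ds (r+1) : ℝ) = 0 := by
      by_cases hcd : c = d
      · -- double root argument
        subst hcd
        have hLfac : L = C ((ds (r+1) : ℝ)) * (X + C (c + r)) := by
          have h0 : (cs (r+1) : ℝ) = (ds (r+1) : ℝ) * (c + r) := by
            have := hLc; rw [hLeval] at this; linarith
          rw [hL, h0, map_mul]; ring
        have hcancel : C ((ds (r+1) : ℝ)) * AB = -((X + C (c + r)) * Q) := by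
          have hne : (X + C (c + r) : Polynomial ℝ) ≠ 0 := (monic_X_add_C _).ne_zero
          apply mul_left_cancel₀ hne
          have : (X + C (c+r)) * (C ((ds (r+1) : ℝ)) * AB) + (X + C (c+r)) * ((X + C (c+r)) * Q) = 0 := by
            rw [hLfac] at hsplit; rw [hG] at hsplit; linear_combination hsplit
          linear_combination this
        have hz : (ds (r+1) : ℝ) * AB.eval (-(c+(r:ℝ))) = 0 := by
          have := congrArg (Polynomial.eval (-(c + (r:ℝ)))) hcancel
          simp only [eval_mul, eval_neg, eval_add, eval_X, eval_C] at this
          linear_combination this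
        have hds : (ds (r+1) : ℝ) = 0 := (mul_eq_zero.mp hz).resolve_right hABc
        have hcs : (cs (r+1) : ℝ) = 0 := by
          have := hLc; rw [hLeval] at this; rw [hds] at this; linarith
        exact ⟨hcs, hds⟩
      · have h1 := hLc; have h2 := hLd
        rw [hLeval] at h1 h2
        have hds : (ds (r+1) : ℝ) = 0 := by
          by_contra hd0
          apply hcd
          have : (ds (r+1) : ℝ) * (c + r) = (ds (r+1) : ℝ) * (d + r) := by linarith
          have := mul_left_cancel₀ hd0 this
          linarith
        refine ⟨?_, hds⟩
        rw [hds] at h1; linarith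
    have hL0 : L = 0 := by
      rw [hL, htop.1, htop.2]; simp
    have hQ0 : Q = 0 := by
      rw [hL0] at hsplit
      simp only [zero_mul, zero_add] at hsplit
      have hGne : G ≠ 0 := mul_ne_zero (monic_X_add_C _).ne_zero (monic_X_add_C _).ne_zero
      exact (mul_eq_zero.mp hsplit).resolve_right hGne
    -- apply IH
    have hrec := ih (fun t => by
      have := congrArg (Polynomial.eval t) hQ0
      simpa [hQ, eval_finset_sum, Ppoly_eval] using this)
    intro j hj
    rcases Finset.mem_Icc.mp hj with ⟨hj1, hj2⟩
    by_cases hjr : j = r + 1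
    · subst hjr
      exact ⟨by exact_mod_cast htop.1, by exact_mod_cast htop.2⟩
    · exact hrec j (Finset.mem_Icc.mpr ⟨hj1, by omega⟩)

/-- Linear independence lemma: if `∑_{j=1}^r (c_j + d_j t) P_j(t) = 0` identically,
then all `c_j = d_j = 0`. -/
theorem stmt9 (a b c d : ℝ) (r : ℕ)
    (hac : NotInt (a - c)) (had : NotInt (a - d))
    (hbc : NotInt (b - c)) (hbd : NotInt (b - d))
    (ha : ∀ n m : ℕ, a + n ≠ -(m : ℝ)) (hb : ∀ n m : ℕ, b + n ≠ -(m : ℝ))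
    (cs ds : ℕ → ℚ)
    (h : ∀ t : ℝ, ∑ j ∈ Finset.Icc 1 r, ((cs j : ℝ) + (ds j : ℝ) * t) * P a b c d r j t = 0) :
    ∀ j ∈ Finset.Icc 1 r, cs j = 0 ∧ ds j = 0 :=
  key a b c d r hac had hbc hbd cs ds h
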